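/- Let D = (V, A, ψ) be a balanced multidigraph, let s, t ∈ V, and let k ∈ ℕ. Let P and Q be two nonempty subsets of V with V = P ⊔ Q. Then |{B ∈ U_k : S(B) = P}| = |{B ∈ U_k : T(B) = Q}|. -/

import Mathlib

/-!
A multidigraph is given by two finite types `V` (vertices) and `A` (arcs)
together with a map `ψ : A → V × V` sending each arc to its (source, target) pair.
For a subset `B ⊆ A`, the induced subdigraph `D⟨B⟩` has vertex set `V` and arc set `B`.
-/

/-- There is an arc of `B` from `v` to `w` in the subdigraph `D⟨B⟩`. -/
def ArcStep {V A : Type*} (ψ : A → V × V) (B : Set A) (v w : V) : Prop :=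
  ∃ a ∈ B, ψ a = (v, w)

/-- `v` can `B`-reach `w`: the subdigraph `D⟨B⟩` has a walk from `v` to `w`. -/
def CanReach {V A : Type*} (ψ : A → V × V) (B : Set A) (v w : V) : Prop :=
  Relation.ReflTransGen (ArcStep ψ B) v w

/-- `B ⊆ A` is acyclic: the subdigraph `D⟨B⟩` has no directed cycles
(equivalently, no closed walk of positive length). -/
def IsAcyclic {V A : Type*} (ψ : A → V × V) (B : Set A) : Prop :=
  ∀ v : V, ¬ Relation.TransGen (ArcStep ψ B) v v

/-- `B` is an `s`-convergence: `B` is acyclic and `s` is a to-root of `D⟨B⟩`,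
i.e. every vertex can `B`-reach `s`. -/
def IsConvergence {V A : Type*} (ψ : A → V × V) (B : Set A) (s : V) : Prop :=
  IsAcyclic ψ B ∧ ∀ v : V, CanReach ψ B v s

/-- `γ_k(s)`: the number of `s`-convergences of size `k`. -/
noncomputable def gammaCount {V A : Type*} (ψ : A → V × V) (k : ℕ) (s : V) : ℕ :=
  {B : Set A | IsConvergence ψ B s ∧ B.ncard = k}.ncard

/-- The attraction basin of `s` with respect to `B`: all vertices that can `B`-reach `s`. -/
def basin {V A : Type*} (ψ : A → V × V) (B : Set A) (s : V) : Set V :=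
  {v : V | CanReach ψ B v s}

/-- `A(P,Q)`: the set of arcs with source in `P` and target in `Q`. -/
def arcsFromTo {V A : Type*} (ψ : A → V × V) (P Q : Set V) : Set A :=
  {a : A | (ψ a).1 ∈ P ∧ (ψ a).2 ∈ Q}

/-- The outdegree of a vertex: the number of arcs with source `v`. -/
noncomputable def outDeg {V A : Type*} (ψ : A → V × V) (v : V) : ℕ :=
  {a : A | (ψ a).1 = v}.ncard

/-- The indegree of a vertex: the number of arcs with target `v`. -/
noncomputable def inDeg {V A : Type*} (ψ : A → V × V) (v : V) : ℕ :=
  {a : A | (ψ a).2 = v}.ncard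

/-- The digraph is balanced: each vertex has outdegree equal to indegree. -/
def IsBalanced {V A : Type*} (ψ : A → V × V) : Prop :=
  ∀ v : V, outDeg ψ v = inDeg ψ v

/-- `U_k`: the set of all acyclic `k`-element subsets `B` of `A` such that each
vertex can `B`-reach `s` or can `B`-reach `t`. -/
def Uset {V A : Type*} (ψ : A → V × V) (s t : V) (k : ℕ) : Set (Set A) :=
  {B : Set A | IsAcyclic ψ B ∧ B.ncard = k ∧ basin ψ B s ∪ basin ψ B t = Set.univ}

/-- `X_i^{P,Q}`: the set of all acyclic `i`-element subsets `B` of `A` with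
`S(B) = P` and `T(B) = Q` (empty for negative `i`). -/
def Xset {V A : Type*} (ψ : A → V × V) (s t : V) (P Q : Set V) (i : ℤ) : Set (Set A) :=
  {B : Set A | IsAcyclic ψ B ∧ (B.ncard : ℤ) = i ∧ basin ψ B s = P ∧ basin ψ B t = Q}

/-- `|X_i^{P,Q}|`. -/
noncomputable def Xcount {V A : Type*} (ψ : A → V × V) (s t : V) (P Q : Set V) (i : ℤ) : ℕ :=
  (Xset ψ s t P Q i).ncard

section Aux

open Relation Set

variable {V A : Type*}

lemma arcStep_mono (ψ : A → V × V) {B B' : Set A} (h : B ⊆ B') {v w : V} :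
    ArcStep ψ B v w → ArcStep ψ B' v w := by
  rintro ⟨a, ha, hpa⟩; exact ⟨a, h ha, hpa⟩

lemma canReach_mono (ψ : A → V × V) {B B' : Set A} (h : B ⊆ B') {v w : V} :
    CanReach ψ B v w → CanReach ψ B' v w :=
  fun hr => ReflTransGen.mono (fun _ _ => arcStep_mono ψ h) _ _ hr

lemma isAcyclic_mono (ψ : A → V × V) {B B' : Set A} (h : B ⊆ B') (hB' : IsAcyclic ψ B') :
    IsAcyclic ψ B := fun v hv => hB' v (TransGen.mono (fun _ _ => arcStep_mono ψ h) _ _ hv)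

/-- If `W` is forward closed under `B`-arcs (with the arcs witnessing closure in `B₀`),
then a walk starting in `W` stays in `W` and uses only `B₀` arcs. -/
lemma rtg_fwd (ψ : A → V × V) {B B₀ : Set A} {W : Set V}
    (hcl : ∀ a ∈ B, (ψ a).1 ∈ W → (ψ a).2 ∈ W ∧ a ∈ B₀)
    {v w : V} (h : Relation.ReflTransGen (ArcStep ψ B) v w) :
    v ∈ W → w ∈ W ∧ Relation.ReflTransGen (ArcStep ψ B₀) v w := by
  induction h using Relation.ReflTransGen.head_induction_on with
  | refl => exact fun hv => ⟨hv, Relation.ReflTransGen.refl⟩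
  | head step rest ih =>
    intro hv
    obtain ⟨a, haB, hpa⟩ := step
    have h1 := hcl a haB (by rw [hpa]; exact hv)
    rw [hpa] at h1
    obtain ⟨hw, hrtg⟩ := ih h1.1
    exact ⟨hw, Relation.ReflTransGen.head ⟨a, h1.2, hpa⟩ hrtg⟩

lemma tg_fwd (ψ : A → V × V) {B B₀ : Set A} {W : Set V}
    (hcl : ∀ a ∈ B, (ψ a).1 ∈ W → (ψ a).2 ∈ W ∧ a ∈ B₀)
    {v w : V} (h : Relation.TransGen (ArcStep ψ B) v w) :
    v ∈ W → Relation.TransGen (ArcStep ψ B₀) v w := by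
  induction h using Relation.TransGen.head_induction_on with
  | single step =>
    intro hv
    obtain ⟨a, haB, hpa⟩ := step
    have h1 := hcl a haB (by rw [hpa]; exact hv)
    exact Relation.TransGen.single ⟨a, h1.2, hpa⟩
  | head step rest ihh =>
    intro hv
    obtain ⟨a, haB, hpa⟩ := step
    have h1 := hcl a haB (by rw [hpa]; exact hv)
    rw [hpa] at h1
    exact Relation.TransGen.head ⟨a, h1.2, hpa⟩ (ihh h1.1)

/-- If `W` is backward closed under `B`-arcs (with witnessing arcs in `B₀`),
then a walk ending in `W` starts in `W` and uses only `B₀` arcs. -/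
lemma rtg_back (ψ : A → V × V) {B B₀ : Set A} {W : Set V}
    (hback : ∀ a ∈ B, (ψ a).2 ∈ W → (ψ a).1 ∈ W ∧ a ∈ B₀)
    {v s : V} (h : Relation.ReflTransGen (ArcStep ψ B) v s) (hs : s ∈ W) :
    v ∈ W ∧ Relation.ReflTransGen (ArcStep ψ B₀) v s := by
  induction h using Relation.ReflTransGen.head_induction_on with
  | refl => exact ⟨hs, Relation.ReflTransGen.refl⟩
  | head step rest ih =>
    obtain ⟨a, haB, hpa⟩ := step
    have h1 := hback a haB (by rw [hpa]; exact ih.1)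
    rw [hpa] at h1
    exact ⟨h1.1, Relation.ReflTransGen.head ⟨a, h1.2, hpa⟩ ih.2⟩

lemma rtg_cases (ψ : A → V × V) {B' B₀ : Set A} {P : Set V}
    (hcl : ∀ a ∈ B', (ψ a).1 ∈ P → (ψ a).2 ∈ P)
    (hC : ∀ a ∈ B', a ∈ B₀ ∨ (ψ a).2 ∈ P)
    {x y : V} (h : Relation.ReflTransGen (ArcStep ψ B') x y) :
    Relation.ReflTransGen (ArcStep ψ B₀) x y ∨ y ∈ P := by
  induction h using Relation.ReflTransGen.head_induction_on with
  | refl => exact Or.inl Relation.ReflTransGen.refl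
  | head step rest ih =>
    obtain ⟨a, haB, hpa⟩ := step
    rcases hC a haB with h0 | hP
    · rcases ih with h1 | h1
      · exact Or.inl (Relation.ReflTransGen.head ⟨a, h0, hpa⟩ h1)
      · exact Or.inr h1
    · right
      have hcl' : ∀ a ∈ B', (ψ a).1 ∈ P → (ψ a).2 ∈ P ∧ a ∈ B' :=
        fun a ha h => ⟨hcl a ha h, ha⟩
      exact (rtg_fwd ψ hcl' rest (by rw [hpa] at hP; exact hP)).1

lemma split_lemma (ψ : A → V × V) {s t : V} {P Q : Set V}
    (hQne : Q.Nonempty) (hunion : P ∪ Q = Set.univ) (hdisj : P ∩ Q = ∅)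
    {B : Set A} (hcover : basin ψ B s ∪ basin ψ B t = Set.univ)
    (hbasin : basin ψ B s = P) :
    s ∈ P ∧ t ∈ Q ∧ (∀ a ∈ B, (ψ a).2 ∈ P → (ψ a).1 ∈ P) ∧
      (∀ v ∈ P, CanReach ψ (B \ arcsFromTo ψ P Q) v s) ∧
      (∀ v ∈ Q, CanReach ψ (B \ arcsFromTo ψ P Q) v t) := by
  have hdisj' : ∀ v : V, v ∈ P → v ∈ Q → False := by
    intro v h1 h2
    have : v ∈ P ∩ Q := ⟨h1, h2⟩
    rw [hdisj] at this; exact this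
  have hPQv : ∀ v : V, v ∈ P ∨ v ∈ Q := by
    intro v
    have : v ∈ P ∪ Q := by rw [hunion]; trivial
    exact this
  have hsP : s ∈ P := by rw [← hbasin]; exact Relation.ReflTransGen.refl
  have hback : ∀ a ∈ B, (ψ a).2 ∈ P → (ψ a).1 ∈ P := by
    intro a ha h2
    rw [← hbasin] at h2 ⊢
    exact Relation.ReflTransGen.head ⟨a, ha, rfl⟩ h2
  have hbackK : ∀ a ∈ B, (ψ a).2 ∈ P → (ψ a).1 ∈ P ∧ a ∈ B \ arcsFromTo ψ P Q := by
    intro a ha h2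
    refine ⟨hback a ha h2, ha, fun hk => hdisj' _ h2 hk.2⟩
  have hfwdK : ∀ a ∈ B, (ψ a).1 ∈ Q → (ψ a).2 ∈ Q ∧ a ∈ B \ arcsFromTo ψ P Q := by
    intro a ha h1
    have h2 : (ψ a).2 ∈ Q := by
      rcases hPQv (ψ a).2 with h | h
      · exact absurd (hback a ha h) (fun hc => hdisj' _ hc h1)
      · exact h
    exact ⟨h2, ha, fun hk => hdisj' _ hk.1 h1⟩
  have hreachQ : ∀ v ∈ Q, CanReach ψ B v t ∧ t ∈ Q ∧
      CanReach ψ (B \ arcsFromTo ψ P Q) v t := by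
    intro v hv
    have hvt : CanReach ψ B v t := by
      have hvu : v ∈ basin ψ B s ∪ basin ψ B t := by rw [hcover]; trivial
      rcases hvu with h | h
      · rw [hbasin] at h; exact absurd h (fun hc => hdisj' _ hc hv)
      · exact h
    have := rtg_fwd ψ hfwdK hvt hv
    exact ⟨hvt, this.1, this.2⟩
  obtain ⟨q, hq⟩ := hQne
  have htQ : t ∈ Q := (hreachQ q hq).2.1
  refine ⟨hsP, htQ, hback, ?_, fun v hv => (hreachQ v hv).2.2⟩
  intro v hv
  rw [← hbasin] at hv
  exact (rtg_back ψ hbackK hv hsP).2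

lemma reconstruct_lemma (ψ : A → V × V) {s t : V} {P Q : Set V}
    (hunion : P ∪ Q = Set.univ) (hdisj : P ∩ Q = ∅)
    {B₀ C : Set A}
    (hwithin : ∀ a ∈ B₀, ((ψ a).1 ∈ P ∧ (ψ a).2 ∈ P) ∨ ((ψ a).1 ∈ Q ∧ (ψ a).2 ∈ Q))
    (hacy : IsAcyclic ψ B₀) (hs : s ∈ P) (ht : t ∈ Q)
    (hreachP : ∀ v ∈ P, CanReach ψ B₀ v s) (hreachQ : ∀ v ∈ Q, CanReach ψ B₀ v t)
    (hC : C ⊆ arcsFromTo ψ Q P) :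
    IsAcyclic ψ (B₀ ∪ C) ∧ basin ψ (B₀ ∪ C) t = Q ∧ P ⊆ basin ψ (B₀ ∪ C) s := by
  have hdisj' : ∀ v : V, v ∈ P → v ∈ Q → False := by
    intro v h1 h2
    have : v ∈ P ∩ Q := ⟨h1, h2⟩
    rw [hdisj] at this; exact this
  have hPQv : ∀ v : V, v ∈ P ∨ v ∈ Q := by
    intro v
    have : v ∈ P ∪ Q := by rw [hunion]; trivial
    exact this
  have hclB₀ : ∀ a ∈ B₀ ∪ C, (ψ a).1 ∈ P → (ψ a).2 ∈ P ∧ a ∈ B₀ := by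
    intro a ha h1
    rcases ha with h | h
    · rcases hwithin a h with ⟨_, h2⟩ | ⟨h2, _⟩
      · exact ⟨h2, h⟩
      · exact absurd h1 (fun hc => hdisj' _ hc h2)
    · exact absurd h1 (fun hc => hdisj' _ hc (hC h).1)
  have hCor : ∀ a ∈ B₀ ∪ C, a ∈ B₀ ∨ (ψ a).2 ∈ P := by
    intro a ha
    rcases ha with h | h
    · exact Or.inl h
    · exact Or.inr (hC h).2
  have hacy' : IsAcyclic ψ (B₀ ∪ C) := by
    intro v hv
    rcases hPQv v with hvP | hvQ
    · exact hacy v (tg_fwd ψ hclB₀ hv hvP)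
    · cases hv with
      | single harc =>
        obtain ⟨a, ha, hpa⟩ := harc
        rcases ha with h | h
        · exact hacy v (Relation.TransGen.single ⟨a, h, hpa⟩)
        · exact hdisj' v (by have := (hC h).2; rw [hpa] at this; exact this) hvQ
      | tail h1 harc =>
        rename_i b
        obtain ⟨a, ha, hpa⟩ := harc
        rcases ha with h | h
        · rcases hwithin a h with ⟨_, h2⟩ | ⟨h2, _⟩
          · exact hdisj' v (by rw [hpa] at h2; exact h2) hvQ
          · have hbQ : b ∈ Q := by rw [hpa] at h2; exact h2
            have hrtg := Relation.TransGen.to_reflTransGen h1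
            rcases rtg_cases ψ (fun a ha h => (hclB₀ a ha h).1) hCor hrtg with h3 | h3
            · exact hacy v (Relation.TransGen.tail' h3 ⟨a, h, hpa⟩)
            · exact hdisj' b h3 hbQ
        · exact hdisj' v (by have := (hC h).2; rw [hpa] at this; exact this) hvQ
  have hbasinT : basin ψ (B₀ ∪ C) t = Q := by
    ext v
    constructor
    · intro hv
      by_contra hvQ
      rcases hPQv v with hvP | h
      · have hcl' : ∀ a ∈ B₀ ∪ C, (ψ a).1 ∈ P → (ψ a).2 ∈ P ∧ a ∈ B₀ ∪ C :=
          fun a ha h => ⟨(hclB₀ a ha h).1, ha⟩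
        exact hdisj' t ((rtg_fwd ψ hcl' hv hvP).1) ht
      · exact hvQ h
    · intro hv
      exact canReach_mono ψ Set.subset_union_left (hreachQ v hv)
  exact ⟨hacy', hbasinT, fun v hv => canReach_mono ψ Set.subset_union_left (hreachP v hv)⟩

end Aux

lemma Uset_comm {V A : Type*} (ψ : A → V × V) (s t : V) (k : ℕ) :
    Uset ψ s t k = Uset ψ t s k := by
  ext B
  exact ⟨fun ⟨h1, h2, h3⟩ => ⟨h1, h2, by rw [Set.union_comm]; exact h3⟩,
    fun ⟨h1, h2, h3⟩ => ⟨h1, h2, by rw [Set.union_comm]; exact h3⟩⟩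

lemma ncard_arcs_balanced {V A : Type*} [Fintype V] [Fintype A] (ψ : A → V × V)
    (hbal : IsBalanced ψ) (P Q : Set V) (hunion : P ∪ Q = Set.univ) (hdisj : P ∩ Q = ∅) :
    (arcsFromTo ψ P Q).ncard = (arcsFromTo ψ Q P).ncard := by
  classical
  have hdisj' : ∀ v : V, v ∈ P → v ∈ Q → False := by
    intro v h1 h2
    have : v ∈ P ∩ Q := ⟨h1, h2⟩
    rw [hdisj] at this; exact this
  have hPQv : ∀ v : V, v ∈ P ∨ v ∈ Q := by
    intro v
    have : v ∈ P ∪ Q := by rw [hunion]; trivial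
    exact this
  have key : ∀ f : A → V,
      {a : A | f a ∈ P}.ncard = ∑ v ∈ P.toFinset, {a : A | f a = v}.ncard := by
    intro f
    rw [Set.ncard_eq_toFinset_card', Set.toFinset_setOf]
    rw [Finset.card_eq_sum_card_fiberwise (f := f) (t := P.toFinset)
      (by intro a ha; simp_all)]
    apply Finset.sum_congr rfl
    intro v hv
    rw [Set.ncard_eq_toFinset_card', Set.toFinset_setOf]
    congr 1
    rw [Finset.filter_filter]
    apply Finset.filter_congr
    intro a _
    simp only [Set.mem_toFinset] at hv
    constructor
    · rintro ⟨_, h⟩; exact h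
    · intro h; exact ⟨by rw [h]; exact hv, h⟩
  have h1 : {a : A | (ψ a).1 ∈ P}.ncard = {a : A | (ψ a).2 ∈ P}.ncard := by
    rw [key (fun a => (ψ a).1), key (fun a => (ψ a).2)]
    exact Finset.sum_congr rfl fun v _ => hbal v
  have split1 : {a : A | (ψ a).1 ∈ P} = arcsFromTo ψ P P ∪ arcsFromTo ψ P Q := by
    ext a
    constructor
    · intro h
      rcases hPQv (ψ a).2 with h2 | h2
      · exact Or.inl ⟨h, h2⟩
      · exact Or.inr ⟨h, h2⟩
    · rintro (⟨h, _⟩ | ⟨h, _⟩) <;> exact h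
  have split2 : {a : A | (ψ a).2 ∈ P} = arcsFromTo ψ P P ∪ arcsFromTo ψ Q P := by
    ext a
    constructor
    · intro h
      rcases hPQv (ψ a).1 with h2 | h2
      · exact Or.inl ⟨h2, h⟩
      · exact Or.inr ⟨h2, h⟩
    · rintro (⟨_, h⟩ | ⟨_, h⟩) <;> exact h
  have hd1 : Disjoint (arcsFromTo ψ P P) (arcsFromTo ψ P Q) := by
    rw [Set.disjoint_left]
    rintro a ⟨_, h2⟩ ⟨_, h2'⟩
    exact hdisj' _ h2 h2'
  have hd2 : Disjoint (arcsFromTo ψ P P) (arcsFromTo ψ Q P) := by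
    rw [Set.disjoint_left]
    rintro a ⟨h1', _⟩ ⟨h2', _⟩
    exact hdisj' _ h1' h2'
  rw [split1, split2, Set.ncard_union_eq hd1 (Set.toFinite _) (Set.toFinite _),
    Set.ncard_union_eq hd2 (Set.toFinite _) (Set.toFinite _)] at h1
  omega

lemma exists_swap_fun {A : Type*} [Fintype A] (K K' : Set A) (h : K.ncard = K'.ncard) :
    ∃ g g' : A → A, (∀ a ∈ K, g a ∈ K') ∧ (∀ a ∈ K', g' a ∈ K) ∧
      (∀ a ∈ K, g' (g a) = a) ∧ (∀ a ∈ K', g (g' a) = a) := by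
  classical
  have hnat : Nat.card K = Nat.card K' := by
    rwa [Nat.card_coe_set_eq, Nat.card_coe_set_eq]
  obtain ⟨e⟩ : Nonempty (K ≃ K') := by
    rw [Nat.card_eq_fintype_card, Nat.card_eq_fintype_card] at hnat
    exact ⟨Fintype.equivOfCardEq hnat⟩
  refine ⟨fun a => if h : a ∈ K then (e ⟨a, h⟩ : A) else a,
    fun a => if h : a ∈ K' then (e.symm ⟨a, h⟩ : A) else a, ?_, ?_, ?_, ?_⟩
  · intro a ha
    show (if h : a ∈ K then ((e ⟨a, h⟩ : A)) else a) ∈ K'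
    rw [dif_pos ha]; exact (e ⟨a, ha⟩).2
  · intro a ha
    show (if h : a ∈ K' then ((e.symm ⟨a, h⟩ : A)) else a) ∈ K
    rw [dif_pos ha]; exact (e.symm ⟨a, ha⟩).2
  · intro a ha
    show (fun a => if h : a ∈ K' then ((e.symm ⟨a, h⟩ : A)) else a)
      (if h : a ∈ K then ((e ⟨a, h⟩ : A)) else a) = a
    rw [dif_pos ha]
    show (if h : (e ⟨a, ha⟩ : A) ∈ K' then ((e.symm ⟨(e ⟨a, ha⟩ : A), h⟩ : K) : A) else (e ⟨a, ha⟩ : A)) = a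
    rw [dif_pos (e ⟨a, ha⟩).2]
    have : (⟨(e ⟨a, ha⟩ : A), (e ⟨a, ha⟩).2⟩ : K') = e ⟨a, ha⟩ := rfl
    rw [this, Equiv.symm_apply_apply]
  · intro a ha
    show (fun a => if h : a ∈ K then ((e ⟨a, h⟩ : A)) else a)
      (if h : a ∈ K' then ((e.symm ⟨a, h⟩ : A)) else a) = a
    rw [dif_pos ha]
    show (if h : (e.symm ⟨a, ha⟩ : A) ∈ K then ((e ⟨(e.symm ⟨a, ha⟩ : A), h⟩ : K') : A) else (e.symm ⟨a, ha⟩ : A)) = a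
    rw [dif_pos (e.symm ⟨a, ha⟩).2]
    have : (⟨(e.symm ⟨a, ha⟩ : A), (e.symm ⟨a, ha⟩).2⟩ : K) = e.symm ⟨a, ha⟩ := rfl
    rw [this, Equiv.apply_symm_apply]

lemma mainstep {V A : Type*} [Fintype V] [Fintype A] (ψ : A → V × V) (s t : V) (k : ℕ)
    (P Q : Set V) (hQne : Q.Nonempty) (hunion : P ∪ Q = Set.univ) (hdisj : P ∩ Q = ∅)
    (g : A → A) (hgK : ∀ a ∈ arcsFromTo ψ P Q, g a ∈ arcsFromTo ψ Q P)
    (hginj : Set.InjOn g (arcsFromTo ψ P Q))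
    (B : Set A) (hB : B ∈ Uset ψ s t k) (hbasin : basin ψ B s = P) :
    ((B \ arcsFromTo ψ P Q) ∪ g '' (B ∩ arcsFromTo ψ P Q)) ∈ Uset ψ s t k ∧
      basin ψ ((B \ arcsFromTo ψ P Q) ∪ g '' (B ∩ arcsFromTo ψ P Q)) t = Q ∧
      B ∩ arcsFromTo ψ Q P = ∅ := by
  obtain ⟨hacy, hcard, hcover⟩ := hB
  obtain ⟨hsP, htQ, hback, hreachP, hreachQ⟩ := split_lemma ψ hQne hunion hdisj hcover hbasin
  have hdisj' : ∀ v : V, v ∈ P → v ∈ Q → False := by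
    intro v h1 h2
    have : v ∈ P ∩ Q := ⟨h1, h2⟩
    rw [hdisj] at this; exact this
  have hPQv : ∀ v : V, v ∈ P ∨ v ∈ Q := by
    intro v
    have : v ∈ P ∪ Q := by rw [hunion]; trivial
    exact this
  have hwithin : ∀ a ∈ B \ arcsFromTo ψ P Q,
      ((ψ a).1 ∈ P ∧ (ψ a).2 ∈ P) ∨ ((ψ a).1 ∈ Q ∧ (ψ a).2 ∈ Q) := by
    rintro a ⟨haB, haK⟩
    rcases hPQv (ψ a).2 with h2 | h2
    · exact Or.inl ⟨hback a haB h2, h2⟩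
    · rcases hPQv (ψ a).1 with h1 | h1
      · exact absurd ⟨h1, h2⟩ haK
      · exact Or.inr ⟨h1, h2⟩
  have hC' : g '' (B ∩ arcsFromTo ψ P Q) ⊆ arcsFromTo ψ Q P := by
    rintro x ⟨a, ha, rfl⟩; exact hgK a ha.2
  obtain ⟨hacy', hbasinT, hPsub⟩ := reconstruct_lemma ψ hunion hdisj hwithin
    (isAcyclic_mono ψ Set.diff_subset hacy) hsP htQ hreachP hreachQ hC'
  have hBK' : B ∩ arcsFromTo ψ Q P = ∅ := by
    ext a
    simp only [Set.mem_inter_iff, Set.mem_empty_iff_false, iff_false, not_and]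
    rintro haB ⟨h1, h2⟩
    exact hdisj' _ (hback a haB h2) h1
  have hcover' : basin ψ ((B \ arcsFromTo ψ P Q) ∪ g '' (B ∩ arcsFromTo ψ P Q)) s ∪
      basin ψ ((B \ arcsFromTo ψ P Q) ∪ g '' (B ∩ arcsFromTo ψ P Q)) t = Set.univ := by
    rw [Set.eq_univ_iff_forall]
    intro v
    rcases hPQv v with h | h
    · exact Or.inl (hPsub h)
    · exact Or.inr (by rw [hbasinT]; exact h)
  have hdisjBC : Disjoint (B \ arcsFromTo ψ P Q) (g '' (B ∩ arcsFromTo ψ P Q)) := by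
    rw [Set.disjoint_left]
    rintro a ⟨haB, _⟩ haC
    have h := hC' haC
    exact hdisj' _ (hback a haB h.2) h.1
  have hcard' : ((B \ arcsFromTo ψ P Q) ∪ g '' (B ∩ arcsFromTo ψ P Q)).ncard = k := by
    rw [Set.ncard_union_eq hdisjBC (Set.toFinite _) (Set.toFinite _),
      Set.ncard_image_of_injOn (hginj.mono Set.inter_subset_right)]
    have hd : Disjoint (B \ arcsFromTo ψ P Q) (B ∩ arcsFromTo ψ P Q) := by
      rw [Set.disjoint_left]
      rintro a ⟨_, h⟩ ⟨_, h'⟩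
      exact h h'
    rw [← Set.ncard_union_eq hd (Set.toFinite _) (Set.toFinite _), Set.diff_union_inter]
    exact hcard
  exact ⟨⟨hacy', hcard', hcover'⟩, hbasinT, hBK'⟩

/-- For a balanced multidigraph and nonempty `P, Q` with `V = P ⊔ Q`,
`|{B ∈ U_k : S(B) = P}| = |{B ∈ U_k : T(B) = Q}|`. -/
theorem count_S_eq_P_eq_count_T_eq_Q {V A : Type*} [Fintype V] [Fintype A]
    (ψ : A → V × V) (hbal : IsBalanced ψ) (s t : V) (k : ℕ)
    (P Q : Set V) (hP : P.Nonempty) (hQ : Q.Nonempty)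
    (hunion : P ∪ Q = Set.univ) (hdisj : P ∩ Q = ∅) :
    {B ∈ Uset ψ s t k | basin ψ B s = P}.ncard =
      {B ∈ Uset ψ s t k | basin ψ B t = Q}.ncard := by
  classical
  obtain ⟨g, g', hgK, hg'K, hgg', hg'g⟩ := exists_swap_fun (arcsFromTo ψ P Q)
    (arcsFromTo ψ Q P) (ncard_arcs_balanced ψ hbal P Q hunion hdisj)
  have hginj : Set.InjOn g (arcsFromTo ψ P Q) := fun a ha b hb h => by
    rw [← hgg' a ha, ← hgg' b hb, h]
  have hg'inj : Set.InjOn g' (arcsFromTo ψ Q P) := fun a ha b hb h => by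
    rw [← hg'g a ha, ← hg'g b hb, h]
  have hunion' : Q ∪ P = Set.univ := by rw [Set.union_comm]; exact hunion
  have hdisj2 : Q ∩ P = ∅ := by rw [Set.inter_comm]; exact hdisj
  -- the two transfer maps
  set Φ : Set A → Set A :=
    fun B => (B \ arcsFromTo ψ P Q) ∪ g '' (B ∩ arcsFromTo ψ P Q) with hΦdef
  set Ψ : Set A → Set A :=
    fun B => (B \ arcsFromTo ψ Q P) ∪ g' '' (B ∩ arcsFromTo ψ Q P) with hΨdef
  -- generic cancellation computation
  have hcalc : ∀ (K K' : Set A) (h h' : A → A), (∀ a ∈ K, h a ∈ K') →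
      (∀ a ∈ K, h' (h a) = a) → ∀ B : Set A, B ∩ K' = ∅ →
      (((B \ K) ∪ h '' (B ∩ K)) \ K') ∪ h' '' (((B \ K) ∪ h '' (B ∩ K)) ∩ K') = B := by
    intro K K' h h' hhK hcancel B hBK'
    have himg : h '' (B ∩ K) ⊆ K' := by rintro x ⟨a, ha, rfl⟩; exact hhK a ha.2
    have e1 : ((B \ K) ∪ h '' (B ∩ K)) \ K' = B \ K := by
      rw [Set.union_diff_distrib]
      have e11 : (B \ K) \ K' = B \ K := by
        ext a
        simp only [Set.mem_diff]
        refine ⟨fun ⟨ha, _⟩ => ha, fun ⟨h1, h2⟩ => ⟨⟨h1, h2⟩, fun hk' => ?_⟩⟩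
        have : a ∈ B ∩ K' := ⟨h1, hk'⟩
        rw [hBK'] at this; exact this
      have e12 : h '' (B ∩ K) \ K' = ∅ := Set.diff_eq_empty.2 himg
      rw [e11, e12, Set.union_empty]
    have e2 : ((B \ K) ∪ h '' (B ∩ K)) ∩ K' = h '' (B ∩ K) := by
      rw [Set.union_inter_distrib_right]
      have e21 : (B \ K) ∩ K' = ∅ := by
        ext a
        simp only [Set.mem_inter_iff, Set.mem_diff, Set.mem_empty_iff_false, iff_false, not_and]
        rintro ⟨h1, _⟩ hk'
        have : a ∈ B ∩ K' := ⟨h1, hk'⟩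
        rw [hBK'] at this; exact this
      rw [e21, Set.empty_union, Set.inter_eq_self_of_subset_left himg]
    rw [e1, e2, Set.image_image]
    have : (fun a => h' (h a)) '' (B ∩ K) = B ∩ K := by
      rw [Set.image_congr (fun a ha => hcancel a ha.2), Set.image_id']
    rw [this, Set.diff_union_inter]
  have hmap1 : ∀ B ∈ {B ∈ Uset ψ s t k | basin ψ B s = P},
      Φ B ∈ {B ∈ Uset ψ s t k | basin ψ B t = Q} ∧ Ψ (Φ B) = B := by
    rintro B ⟨hB, hbas⟩
    obtain ⟨hU, hbT, hBK'⟩ := mainstep ψ s t k P Q hQ hunion hdisj g hgK hginj B hB hbas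
    exact ⟨⟨hU, hbT⟩, hcalc _ _ g g' hgK hgg' B hBK'⟩
  have hmap2 : ∀ B ∈ {B ∈ Uset ψ s t k | basin ψ B t = Q},
      Ψ B ∈ {B ∈ Uset ψ s t k | basin ψ B s = P} ∧ Φ (Ψ B) = B := by
    rintro B ⟨hB, hbas⟩
    obtain ⟨hU, hbS, hBK⟩ := mainstep ψ t s k Q P hP hunion' hdisj2 g' hg'K hg'inj B
      (by rw [← Uset_comm]; exact hB) hbas
    exact ⟨⟨by rw [Uset_comm]; exact hU, hbS⟩, hcalc _ _ g' g hg'K hg'g B hBK⟩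
  have himg : Φ '' {B ∈ Uset ψ s t k | basin ψ B s = P} =
      {B ∈ Uset ψ s t k | basin ψ B t = Q} := by
    apply Set.Subset.antisymm
    · rintro _ ⟨B, hB, rfl⟩
      exact (hmap1 B hB).1
    · intro B hB
      exact ⟨Ψ B, (hmap2 B hB).1, (hmap2 B hB).2⟩
  have hinj : Set.InjOn Φ {B ∈ Uset ψ s t k | basin ψ B s = P} := by
    intro B1 h1 B2 h2 h
    rw [← (hmap1 B1 h1).2, ← (hmap1 B2 h2).2, h]
  rw [← himg, Set.ncard_image_of_injOn hinj]
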